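/- arXiv:2104.04416 — 3 statements merged into one kernel-verified Lean document; each statement's English description precedes it below -/
import Mathlib

section
/- The polynomial score function ψ_P(x) = x/(1 + (x/β)^{1−1/p}) (for fixed β > 0 and integer p ≥ 1) satisfies ψ_P'(x) ≥ (1/4)·1{x ≤ β} for all x ≥ 0. -/
open Real Filter

/-- The polynomial score ψ_P(x) = x/(1 + (x/β)^{1-1/p}) satisfies
ψ_P'(x) ≥ (1/4)·1{x ≤ β} for all x ≥ 0. -/
theorem poly_deriv_ge (β : ℝ) (hβ : 0 < β) (p : ℕ) (hp : 1 ≤ p) :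
    ∀ x ≥ (0:ℝ),
      (if x ≤ β then (1:ℝ)/4 else 0) ≤
        deriv (fun y : ℝ => y / (1 + (y / β) ^ ((1:ℝ) - 1 / (p:ℝ)))) x := by
  intro x hx
  set α : ℝ := (1:ℝ) - 1/(p:ℝ) with hαdef
  have hp1 : (1:ℝ) ≤ (p:ℝ) := by exact_mod_cast hp
  have hp0 : (0:ℝ) < (p:ℝ) := by linarith
  have hα0 : 0 ≤ α := by
    have : 1/(p:ℝ) ≤ 1 := by rw [div_le_one hp0]; exact hp1
    simp only [hαdef]; linarith
  have hα1 : α < 1 := by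
    have : 0 < 1/(p:ℝ) := by positivity
    simp only [hαdef]; linarith
  rcases eq_or_lt_of_le hx with h0 | hxpos
  · -- x = 0
    have hxβ : x ≤ β := by linarith
    rw [if_pos hxβ]
    rcases eq_or_lt_of_le hα0 with hα0' | hαpos
    · -- α = 0, i.e. p = 1 : the function is y/2
      have : (fun y : ℝ => y / (1 + (y / β) ^ α)) = fun y : ℝ => y / 2 := by
        funext y
        rw [← hα0', Real.rpow_zero]; norm_num
      rw [this]
      rw [deriv_div_const, deriv_id'']
      norm_num
    · -- α > 0 : slope argument, deriv = 1
      have hval : 1 / (1 + (x / β) ^ α) = 1 := by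
        rw [← h0]; simp [Real.zero_rpow hαpos.ne']
      have hder : HasDerivAt (fun y : ℝ => y / (1 + (y / β) ^ α)) 1 x := by
        rw [hasDerivAt_iff_tendsto_slope]
        have hc : ContinuousAt (fun y : ℝ => 1 / (1 + (y / β) ^ α)) x := by
          have h1 : ContinuousAt (fun y : ℝ => (y / β) ^ α) x :=
            (Real.continuousAt_rpow_const _ _ (Or.inr hα0)).comp
              ((continuous_id.div_const β).continuousAt)
          apply ContinuousAt.div continuousAt_const (continuousAt_const.add h1)
          rw [← h0]; simp [Real.zero_rpow hαpos.ne']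
        have ht : Filter.Tendsto (fun y : ℝ => 1 / (1 + (y / β) ^ α))
            (nhdsWithin x {x}ᶜ) (nhds 1) := by
          simpa [hval] using hc.tendsto.mono_left nhdsWithin_le_nhds
        apply ht.congr'
        filter_upwards [self_mem_nhdsWithin] with y hy
        have hy0 : y ≠ 0 := by rw [← h0] at hy; exact hy
        rw [slope_def_field, ← h0]
        simp only [zero_div, sub_zero]
        rw [div_right_comm, div_self hy0]
      rw [hder.deriv]; norm_num
  · -- x > 0
    have ht : 0 < x / β := div_pos hxpos hβ
    have hu : 0 < (x / β) ^ α := Real.rpow_pos_of_pos ht α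
    set u : ℝ := (x / β) ^ α with hudef
    have h1 : HasDerivAt (fun y : ℝ => (y / β) ^ α) (α * (x/β) ^ (α - 1) * (1/β)) x := by
      have := (Real.hasDerivAt_rpow_const (x := x/β) (p := α) (Or.inl ht.ne')).comp x
        ((hasDerivAt_id x).div_const β)
      simpa [Function.comp_def] using this
    have h2 : HasDerivAt (fun y : ℝ => 1 + (y / β) ^ α) (α * (x/β) ^ (α - 1) * (1/β)) x := by
      exact h1.const_add 1
    have hder : HasDerivAt (fun y : ℝ => y / (1 + (y / β) ^ α))
        ((1 * (1 + u) - x * (α * (x/β) ^ (α - 1) * (1/β))) / (1 + u) ^ 2) x :=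
      (hasDerivAt_id x).div h2 (by positivity)
    have key : x * (α * (x/β) ^ (α - 1) * (1/β)) = α * u := by
      rw [Real.rpow_sub ht, Real.rpow_one, hudef]
      field_simp
    rw [hder.deriv, key]
    have hden : (0:ℝ) < (1 + u) ^ 2 := by positivity
    split_ifs with hxβ
    · have hu1 : u ≤ 1 := Real.rpow_le_one ht.le ((div_le_one hβ).2 hxβ) hα0
      rw [div_le_div_iff₀ (by norm_num) hden]
      nlinarith [hu.le, mul_le_of_le_one_left hu.le hα1.le]
    · apply div_nonneg _ hden.le
      nlinarith [hu.le, mul_le_of_le_one_left hu.le hα1.le]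
end

section
/- Let Z be a nonnegative real random variable with E[Z] < ∞, and let q ≥ 1 be an integer. Then E[(log(1+Z))^q] ≤ q!·(max(e, log(1+E[Z])))^q. -/
open MeasureTheory

section Aux
open Real Set


/-- If `n ≤ A ≤ B`, then `B^n * e^A ≤ A^n * e^B`. -/
lemma aux_anti {n : ℕ} {A B : ℝ} (hAB : A ≤ B) (hn : (n:ℝ) ≤ A) :
    B ^ n * Real.exp A ≤ A ^ n * Real.exp B := by
  rcases Nat.eq_zero_or_pos n with hn0 | hn0
  · subst hn0; simpa using Real.exp_le_exp.2 hAB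
  have hA : (0:ℝ) < A := lt_of_lt_of_le (by exact_mod_cast hn0) hn
  set d := B - A with hd
  have hd0 : 0 ≤ d := sub_nonneg.2 hAB
  have h1 : 1 + d / A ≤ Real.exp (d / A) := by have := Real.add_one_le_exp (d / A); linarith
  have h2 : (1 + d / A) ^ n ≤ Real.exp (d / A) ^ n := by
    apply pow_le_pow_left₀ (by positivity) h1
  have h3 : Real.exp (d / A) ^ n = Real.exp ((n:ℝ) * (d / A)) := by
    rw [← Real.exp_nat_mul]
  have h4 : (n:ℝ) * (d / A) ≤ d := by
    have h4a : (n:ℝ) * (d / A) ≤ A * (d / A) := mul_le_mul_of_nonneg_right hn (by positivity)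
    have h4b : A * (d / A) = d := by field_simp
    linarith
  have h5 : B ^ n ≤ A ^ n * Real.exp d := by
    have hBA : B = A * (1 + d / A) := by field_simp; rw [hd]; ring
    calc B ^ n = A ^ n * (1 + d / A) ^ n := by rw [hBA, mul_pow]
      _ ≤ A ^ n * Real.exp ((n:ℝ) * (d / A)) := by
          rw [← h3]; exact mul_le_mul_of_nonneg_left h2 (by positivity)
      _ ≤ A ^ n * Real.exp d := by
          exact mul_le_mul_of_nonneg_left (Real.exp_le_exp.2 h4) (by positivity)
  calc B ^ n * Real.exp A ≤ A ^ n * Real.exp d * Real.exp A :=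
        mul_le_mul_of_nonneg_right h5 (Real.exp_pos _).le
    _ = A ^ n * Real.exp B := by rw [mul_assoc, ← Real.exp_add, hd]; ring_nf

/-- If `0 ≤ A ≤ B ≤ n`, then `A^n * e^B ≤ B^n * e^A`. -/
lemma aux_mono {n : ℕ} {A B : ℝ} (hA : 0 ≤ A) (hAB : A ≤ B) (hB : B ≤ (n:ℝ)) :
    A ^ n * Real.exp B ≤ B ^ n * Real.exp A := by
  rcases Nat.eq_zero_or_pos n with hn0 | hn0
  · subst hn0
    have : B = 0 := le_antisymm (by exact_mod_cast hB) (hA.trans hAB)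
    have : A = 0 := le_antisymm (this ▸ hAB) hA
    simp_all
  rcases eq_or_lt_of_le hA with hA0 | hA0
  · have hB0 : 0 ≤ B := hA.trans hAB
    rw [← hA0, zero_pow hn0.ne', zero_mul]
    positivity
  rcases eq_or_lt_of_le hAB with rfl | hAB'
  · exact le_refl _
  set d := B - A with hd
  have hd0 : 0 < d := sub_pos.2 hAB'
  have hdn : d < (n:ℝ) := lt_of_lt_of_le (by nlinarith) hB
  -- exp (d/n) ≤ n / (n - d)
  have hn' : (0:ℝ) < n := by exact_mod_cast hn0
  have h1 : Real.exp (d / n) ≤ (n:ℝ) / ((n:ℝ) - d) := by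
    have := Real.add_one_le_exp (-(d / (n:ℝ)))
    have hpos : (0:ℝ) < 1 - d / n := by
      rw [sub_pos, div_lt_one hn']; exact hdn
    rw [Real.exp_neg] at this
    rw [le_div_iff₀ (by linarith)]
    have h2 : Real.exp (d/n) * (1 - d/n) ≤ 1 := by
      calc Real.exp (d/n) * (1 - d/n) ≤ Real.exp (d/n) * (Real.exp (d/n))⁻¹ := by
            apply mul_le_mul_of_nonneg_left _ (Real.exp_pos _).le
            linarith [this]
      _ = 1 := by rw [mul_inv_cancel₀ (Real.exp_ne_zero _)]
    calc Real.exp (d/n) * ((n:ℝ) - d) = Real.exp (d/n) * (1 - d/n) * n := by field_simp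
      _ ≤ 1 * n := mul_le_mul_of_nonneg_right h2 hn'.le
      _ = n := one_mul _
  have h2 : (n:ℝ) / ((n:ℝ) - d) ≤ B / A := by
    rw [div_le_div_iff₀ (by linarith) hA0]
    nlinarith
  have h3 : Real.exp d ≤ (B / A) ^ n := by
    calc Real.exp d = Real.exp (d / n) ^ n := by
          rw [← Real.exp_nat_mul]; congr 1; field_simp
      _ ≤ ((n:ℝ) / ((n:ℝ) - d)) ^ n := pow_le_pow_left₀ (Real.exp_pos _).le h1 n
      _ ≤ (B / A) ^ n := by
          apply pow_le_pow_left₀ (div_nonneg hn'.le (by linarith)) h2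
  have h4 : A ^ n * Real.exp d ≤ B ^ n := by
    have : A ^ n * (B / A) ^ n = B ^ n := by
      rw [← mul_pow]; congr 1; field_simp
    calc A ^ n * Real.exp d ≤ A ^ n * (B / A) ^ n :=
          mul_le_mul_of_nonneg_left h3 (by positivity)
      _ = B ^ n := this
  calc A ^ n * Real.exp B = A ^ n * Real.exp d * Real.exp A := by
        rw [mul_assoc, ← Real.exp_add, hd]; ring_nf
    _ ≤ B ^ n * Real.exp A := mul_le_mul_of_nonneg_right h4 (Real.exp_pos _).le

lemma hasDerivAt_logpow (q : ℕ) {x : ℝ} (hx : 0 < 1 + x) :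
    HasDerivAt (fun y => (Real.log (1 + y)) ^ q)
      ((q : ℝ) * (Real.log (1 + x)) ^ (q - 1) * (1 + x)⁻¹) x := by
  have h1 : HasDerivAt (fun y : ℝ => 1 + y) 1 x := (hasDerivAt_id x).const_add 1
  have h2 : HasDerivAt (fun y => Real.log (1 + y)) ((1 + x)⁻¹) x := by
    have := (Real.hasDerivAt_log hx.ne').comp x h1
    rw [mul_one] at this; exact this
  have h3 := h2.pow q; simp only [mul_assoc] at h3 ⊢; exact h3

lemma concave_logpow (q : ℕ) (hq : 1 ≤ q) :
    ConcaveOn ℝ (Ici (Real.exp ((q:ℝ) - 1) - 1)) (fun y => (Real.log (1 + y)) ^ q) := by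
  set u : ℝ := (q:ℝ) - 1 with hu
  have hu0 : 0 ≤ u := by simp [hu]; exact_mod_cast hq
  have hx0 : 0 ≤ Real.exp u - 1 := by
    have := Real.one_le_exp hu0
    linarith
  apply AntitoneOn.concaveOn_of_deriv (convex_Ici _)
  · -- continuity
    apply ContinuousOn.pow
    apply ContinuousOn.log (by fun_prop)
    intro y hy
    have : 0 < 1 + y := by simp at hy; linarith
    exact this.ne'
  · intro y hy
    rw [interior_Ici] at hy
    have hy1 : 0 < 1 + y := by simp at hy; linarith
    exact ((hasDerivAt_logpow q hy1).differentiableAt).differentiableWithinAt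
  · intro p hp r hr hpr
    rw [interior_Ici] at hp hr
    have hp1 : 0 < 1 + p := by simp at hp; linarith
    have hr1 : 0 < 1 + r := by simp at hr; linarith
    rw [(hasDerivAt_logpow q hp1).deriv, (hasDerivAt_logpow q hr1).deriv]
    set A := Real.log (1 + p) with hA
    set B := Real.log (1 + r) with hB
    have hAB : A ≤ B := Real.log_le_log hp1 (by linarith)
    have hnA : ((q - 1 : ℕ) : ℝ) ≤ A := by
      have : u ≤ A := by
        rw [hA, Real.le_log_iff_exp_le hp1]
        simp at hp; linarith
      have h' : ((q - 1 : ℕ) : ℝ) = u := by rw [Nat.cast_sub hq]; push_cast; rw [hu]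
      rw [h']; linarith
    have key := aux_anti hAB hnA
    -- B^(q-1) * exp A ≤ A^(q-1) * exp B, exp A = 1+p, exp B = 1+r
    rw [Real.exp_log hp1, Real.exp_log hr1] at key
    -- goal : q * B^(q-1) * (1+r)⁻¹ ≤ q * A^(q-1) * (1+p)⁻¹
    rw [mul_assoc, mul_assoc]
    apply mul_le_mul_of_nonneg_left _ (by positivity : (0:ℝ) ≤ (q:ℝ))
    rw [← div_eq_mul_inv, ← div_eq_mul_inv, div_le_div_iff₀ hr1 hp1]
    linarith

lemma convex_logpow (q : ℕ) (hq : 1 ≤ q) :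
    ConvexOn ℝ (Icc 0 (Real.exp ((q:ℝ) - 1) - 1)) (fun y => (Real.log (1 + y)) ^ q) := by
  set u : ℝ := (q:ℝ) - 1 with hu
  have hu0 : 0 ≤ u := by simp [hu]; exact_mod_cast hq
  apply MonotoneOn.convexOn_of_deriv (convex_Icc _ _)
  · apply ContinuousOn.pow
    apply ContinuousOn.log (by fun_prop)
    intro y hy
    have : 0 < 1 + y := by have := hy.1; linarith
    exact this.ne'
  · intro y hy
    have hy' : y ∈ Icc 0 (Real.exp u - 1) := interior_subset hy
    have hy1 : 0 < 1 + y := by have := hy'.1; linarith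
    exact ((hasDerivAt_logpow q hy1).differentiableAt).differentiableWithinAt
  · intro p hp r hr hpr
    rw [interior_Icc] at hp hr
    have hp1 : 0 < 1 + p := by have := hp.1; linarith
    have hr1 : 0 < 1 + r := by have := hr.1; linarith
    rw [(hasDerivAt_logpow q hp1).deriv, (hasDerivAt_logpow q hr1).deriv]
    set A := Real.log (1 + p) with hA
    set B := Real.log (1 + r) with hB
    have hA0 : 0 ≤ A := Real.log_nonneg (by have := hp.1; linarith)
    have hAB : A ≤ B := Real.log_le_log hp1 (by linarith)
    have hnB : B ≤ ((q - 1 : ℕ) : ℝ) := by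
      have : B ≤ u := by
        rw [hB, Real.log_le_iff_le_exp hr1]
        have := hr.2; linarith
      have h' : ((q - 1 : ℕ) : ℝ) = u := by rw [Nat.cast_sub hq]; push_cast; rw [hu]
      rw [h']; linarith
    have key := aux_mono hA0 hAB hnB
    rw [Real.exp_log hp1, Real.exp_log hr1] at key
    rw [mul_assoc, mul_assoc]
    apply mul_le_mul_of_nonneg_left _ (by positivity : (0:ℝ) ≤ (q:ℝ))
    rw [← div_eq_mul_inv, ← div_eq_mul_inv, div_le_div_iff₀ hp1 hr1]
    linarith

lemma tangent_bound (q : ℕ) (hq : 1 ≤ q) {c : ℝ} (hc : (q:ℝ) ≤ c) {x : ℝ} (hx : 0 ≤ x) :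
    (Real.log (1 + x)) ^ q ≤
      c ^ q + ((q:ℝ) * c ^ (q - 1) * (Real.exp c)⁻¹) * (x - (Real.exp c - 1)) := by
  have hq1 : (1:ℝ) ≤ (q:ℝ) := by exact_mod_cast hq
  have hc0 : 0 < c := lt_of_lt_of_le (by linarith) hc
  set f : ℝ → ℝ := fun y => (Real.log (1 + y)) ^ q with hf
  set u : ℝ := (q:ℝ) - 1 with hu
  have hu0 : 0 ≤ u := by rw [hu]; linarith
  set x0 : ℝ := Real.exp u - 1 with hx0def
  have hx00 : 0 ≤ x0 := by
    have := Real.one_le_exp hu0; rw [hx0def]; linarith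
  set a : ℝ := Real.exp c - 1 with hadef
  have hax0 : x0 ≤ a := by
    rw [hx0def, hadef]
    have : Real.exp u ≤ Real.exp c := Real.exp_le_exp.2 (by rw [hu]; linarith)
    linarith
  set s : ℝ := (q:ℝ) * c ^ (q - 1) * (Real.exp c)⁻¹ with hs
  have hs0 : 0 ≤ s := by rw [hs]; positivity
  have hfa : f a = c ^ q := by
    rw [hf]; simp only [hadef]
    rw [show (1 : ℝ) + (Real.exp c - 1) = Real.exp c by ring, Real.log_exp]
  have hf'a : HasDerivAt f s a := by
    have h1 : 0 < 1 + a := by rw [hadef]; have := Real.exp_pos c; linarith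
    have := hasDerivAt_logpow q h1
    rw [show (1 : ℝ) + a = Real.exp c by rw [hadef]; ring, Real.log_exp] at this
    exact this
  have hconc := concave_logpow q hq
  rw [← hu, ← hx0def] at hconc
  have hnegconv : ConvexOn ℝ (Ici x0) (fun y => -(f y)) := hconc.neg
  have haS : a ∈ Ici x0 := hax0
  -- Step A : tangent inequality on [x0, ∞)
  have htangent : ∀ y, x0 ≤ y → f y ≤ c ^ q + s * (y - a) := by
    intro y hy
    rcases lt_trichotomy y a with h | h | h
    · have hslope := hnegconv.slope_le_of_hasDerivAt (le_of_lt (lt_of_le_of_lt hy h) |> fun _ => hy)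
        haS h (hf'a.neg)
      rw [slope_def_field] at hslope
      have hpos : 0 < a - y := by linarith
      rw [div_le_iff₀ hpos] at hslope
      have : f y - f a ≤ s * (y - a) := by nlinarith [hslope]
      linarith [hfa ▸ this]
    · subst h; rw [hfa]; simp
    · have hslope := hnegconv.le_slope_of_hasDerivAt haS (le_trans hax0 h.le |> fun _ => hy) h
        (hf'a.neg)
      rw [slope_def_field] at hslope
      have hpos : 0 < y - a := by linarith
      rw [le_div_iff₀ hpos] at hslope
      have : f y - f a ≤ s * (y - a) := by nlinarith [hslope]
      linarith [hfa ▸ this]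
  rcases le_or_gt x0 x with hcase | hcase
  · exact htangent x hcase
  -- Step B : x ∈ [0, x0)
  have hx0pos : 0 < x0 := lt_of_le_of_lt hx hcase
  have hconv := convex_logpow q hq
  rw [← hu, ← hx0def] at hconv
  set lam : ℝ := x / x0 with hlam
  have hlam0 : 0 ≤ lam := by positivity
  have hlam1 : lam ≤ 1 := by rw [hlam, div_le_one hx0pos]; linarith
  have hxeq : x = lam * x0 := by rw [hlam]; field_simp
  have hf0 : f 0 = 0 := by
    rw [hf]; simp [Real.log_one, zero_pow (by omega : q ≠ 0)]
  have hchord : f x ≤ lam * f x0 := by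
    have h0mem : (0:ℝ) ∈ Icc 0 x0 := ⟨le_refl _, hx00⟩
    have hx0mem : x0 ∈ Icc 0 x0 := ⟨hx00, le_refl _⟩
    have := hconv.2 h0mem hx0mem (by linarith : (0:ℝ) ≤ 1 - lam) hlam0 (by ring)
    simp only [smul_eq_mul, mul_zero, zero_add] at this
    calc f x = Real.log (1 + lam * x0) ^ q := by rw [hf, hxeq]
      _ ≤ (1 - lam) * Real.log (1 + 0) ^ q + lam * Real.log (1 + x0) ^ q := this
      _ = lam * f x0 := by
          rw [hf]
          simp [Real.log_one, zero_pow (show q ≠ 0 by omega)]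
  -- T 0 ≥ 0, i.e. s * a ≤ c ^ q
  have hT0 : s * a ≤ c ^ q := by
    have h1 : s * a = (q:ℝ) * c ^ (q - 1) * (1 - (Real.exp c)⁻¹) := by
      rw [hs, hadef]
      have := Real.exp_ne_zero c
      field_simp
    have h2 : (1 : ℝ) - (Real.exp c)⁻¹ ≤ 1 := by
      have : 0 < (Real.exp c)⁻¹ := by positivity
      linarith
    have h3 : s * a ≤ (q:ℝ) * c ^ (q - 1) := by
      rw [h1]
      nlinarith [mul_le_mul_of_nonneg_left h2
        (show (0:ℝ) ≤ (q:ℝ) * c ^ (q - 1) by positivity)]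
    have h4 : (q:ℝ) * c ^ (q - 1) ≤ c * c ^ (q - 1) :=
      mul_le_mul_of_nonneg_right hc (by positivity)
    have h5 : c * c ^ (q - 1) = c ^ q := by
      rw [← pow_succ']
      congr 1
      omega
    linarith
  have hTx0 : f x0 ≤ c ^ q + s * (x0 - a) := htangent x0 (le_refl _)
  -- combine
  have key : lam * f x0 ≤ c ^ q + s * (x - a) := by
    have h1 : lam * f x0 ≤ lam * (c ^ q + s * (x0 - a)) :=
      mul_le_mul_of_nonneg_left hTx0 hlam0
    have h2 : c ^ q + s * (x - a) - lam * (c ^ q + s * (x0 - a)) = (1 - lam) * (c ^ q - s * a) := by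
      rw [hxeq]; ring
    nlinarith [mul_nonneg (by linarith : (0:ℝ) ≤ 1 - lam) (by linarith : (0:ℝ) ≤ c ^ q - s * a)]
  linarith [hchord]

lemma pow_self_le_factorial_mul_exp (q : ℕ) :
    ((q:ℝ)) ^ q ≤ (q.factorial : ℝ) * Real.exp q := by
  have hsum := Real.sum_le_exp_of_nonneg (show (0:ℝ) ≤ (q:ℝ) by positivity) (q + 1)
  have hterm : ((q:ℝ)) ^ q / (q.factorial : ℝ) ≤
      ∑ i ∈ Finset.range (q + 1), (q:ℝ) ^ i / (i.factorial : ℝ) := by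
    exact Finset.single_le_sum (f := fun i => (q:ℝ) ^ i / (i.factorial : ℝ))
      (fun i _ => by positivity) (Finset.self_mem_range_succ q)
  have hfac : (0:ℝ) < (q.factorial : ℝ) := by exact_mod_cast q.factorial_pos
  rw [div_le_iff₀ hfac] at hterm
  calc ((q:ℝ)) ^ q ≤ (∑ i ∈ Finset.range (q + 1), (q:ℝ) ^ i / (i.factorial : ℝ)) *
        (q.factorial : ℝ) := hterm
    _ ≤ Real.exp q * (q.factorial : ℝ) := mul_le_mul_of_nonneg_right hsum hfac.le
    _ = (q.factorial : ℝ) * Real.exp q := mul_comm _ _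


end Aux

/-- For a nonnegative integrable random variable Z and integer q ≥ 1,
E[(log(1+Z))^q] ≤ q!·(max(e, log(1+E[Z])))^q. -/
theorem log_moment_bound {Ω : Type*} [MeasurableSpace Ω] (μ : Measure Ω)
    [IsProbabilityMeasure μ] (Z : Ω → ℝ) (hZmeas : Measurable Z)
    (hZnonneg : ∀ ω, 0 ≤ Z ω) (hint : Integrable Z μ) (q : ℕ) (hq : 1 ≤ q) :
    (∫ ω, (Real.log (1 + Z ω)) ^ q ∂μ) ≤
      (q.factorial : ℝ) * (max (Real.exp 1) (Real.log (1 + ∫ ω, Z ω ∂μ))) ^ q := by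
  set m : ℝ := ∫ ω, Z ω ∂μ with hm
  have hm0 : 0 ≤ m := MeasureTheory.integral_nonneg hZnonneg
  set l : ℝ := Real.log (1 + m) with hl
  have hl0 : 0 ≤ l := Real.log_nonneg (by linarith)
  set c : ℝ := max (q:ℝ) l with hcdef
  have hc : (q:ℝ) ≤ c := le_max_left _ _
  have hc0 : 0 < c := lt_of_lt_of_le (by exact_mod_cast hq) hc
  set s : ℝ := (q:ℝ) * c ^ (q - 1) * (Real.exp c)⁻¹ with hs
  have hs0 : 0 ≤ s := by rw [hs]; positivity
  set a : ℝ := Real.exp c - 1 with ha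
  have hma : m ≤ a := by
    have h1 : Real.exp l = 1 + m := Real.exp_log (by linarith)
    have h2 : Real.exp l ≤ Real.exp c := Real.exp_le_exp.2 (le_max_right _ _)
    rw [ha]; linarith
  have hintg : MeasureTheory.Integrable (fun ω => c ^ q + s * (Z ω - a)) μ :=
    (MeasureTheory.integrable_const _).add
      ((hint.sub (MeasureTheory.integrable_const a)).const_mul s)
  have h1 : (∫ ω, (Real.log (1 + Z ω)) ^ q ∂μ) ≤ ∫ ω, (c ^ q + s * (Z ω - a)) ∂μ := by
    apply MeasureTheory.integral_mono_of_nonneg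
    · exact Filter.Eventually.of_forall fun ω =>
        pow_nonneg (Real.log_nonneg (by linarith [hZnonneg ω])) q
    · exact hintg
    · exact Filter.Eventually.of_forall fun ω => tangent_bound q hq hc (hZnonneg ω)
  have h2 : (∫ ω, (c ^ q + s * (Z ω - a)) ∂μ) = c ^ q + s * (m - a) := by
    have e1 : (∫ ω, (c ^ q + s * (Z ω - a)) ∂μ)
        = (∫ _ω, c ^ q ∂μ) + ∫ ω, s * (Z ω - a) ∂μ :=
      MeasureTheory.integral_add (MeasureTheory.integrable_const _)
        ((hint.sub (MeasureTheory.integrable_const a)).const_mul s)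
    have e2 : (∫ ω, s * (Z ω - a) ∂μ) = s * ∫ ω, (Z ω - a) ∂μ :=
      MeasureTheory.integral_const_mul s _
    have e3 : (∫ ω, (Z ω - a) ∂μ) = m - a := by
      rw [MeasureTheory.integral_sub hint (MeasureTheory.integrable_const a)]
      simp [hm]
    rw [e1, e2, e3]
    simp
  have h3 : c ^ q + s * (m - a) ≤ c ^ q := by
    nlinarith [mul_nonneg hs0 (by linarith : (0:ℝ) ≤ a - m)]
  set M : ℝ := max (Real.exp 1) l with hM
  have hM0 : 0 < M := lt_of_lt_of_le (Real.exp_pos 1) (le_max_left _ _)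
  have h4 : c ^ q ≤ (q.factorial : ℝ) * M ^ q := by
    rcases le_total l (q:ℝ) with hcase | hcase
    · have hceq : c = (q:ℝ) := max_eq_left hcase
      have hexp : Real.exp (q:ℝ) = Real.exp 1 ^ q := by
        rw [← Real.exp_nat_mul]; norm_num
      calc c ^ q = ((q:ℝ)) ^ q := by rw [hceq]
        _ ≤ (q.factorial : ℝ) * Real.exp (q:ℝ) := pow_self_le_factorial_mul_exp q
        _ = (q.factorial : ℝ) * Real.exp 1 ^ q := by rw [hexp]
        _ ≤ (q.factorial : ℝ) * M ^ q := by
            apply mul_le_mul_of_nonneg_left _ (by positivity)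
            exact pow_le_pow_left₀ (Real.exp_pos 1).le (le_max_left _ _) q
    · have hceq : c = l := max_eq_right hcase
      have hfac1 : (1:ℝ) ≤ (q.factorial : ℝ) := by exact_mod_cast q.factorial_pos
      calc c ^ q = l ^ q := by rw [hceq]
        _ ≤ M ^ q := pow_le_pow_left₀ hl0 (le_max_right _ _) q
        _ ≤ (q.factorial : ℝ) * M ^ q := le_mul_of_one_le_left (by positivity) hfac1
  linarith
end

section
/- Let ψ: ℝ₊ → ℝ₊ be differentiable, concave, with ψ(0) = 0 and 0 ≤ ψ' ≤ 1, and extend F(x) = (x/‖x‖)ψ(‖x‖) to a Hilbert space H (with F(0)=0). Then for any θ and any unit vector u, the quadratic form of the Jacobian of Z(θ) = E[F(X − θ)] satisfies uᵀ Jac(Z)(θ) u ≤ −E[ψ'(‖X − θ‖)]. -/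
open scoped Classical
open MeasureTheory

section aux
variable {ψ : ℝ → ℝ} (hψdiff : Differentiable ℝ ψ) (hψ0 : ψ 0 = 0)
    (hψderiv : ∀ x ≥ (0:ℝ), 0 ≤ deriv ψ x ∧ deriv ψ x ≤ 1)
    (hconc : ConcaveOn ℝ (Set.Ici 0) ψ)

include hψdiff hconc in
lemma psi_anti : ∀ ⦃a b : ℝ⦄, 0 ≤ a → a ≤ b → deriv ψ b ≤ deriv ψ a := fun _ _ ha hab =>
  hconc.antitoneOn_deriv (fun x _ => hψdiff x) ha (le_trans ha hab) hab

include hψdiff hconc in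
lemma psi_slope_le : ∀ ⦃a b : ℝ⦄, 0 ≤ a → a < b → deriv ψ b * (b - a) ≤ ψ b - ψ a := by
  intro a b ha hab
  have h := hconc.deriv_le_slope ha (le_trans ha hab.le) hab (hψdiff b)
  rw [slope_def_field] at h
  exact (le_div_iff₀ (by linarith)).mp h

include hψdiff hconc in
lemma psi_slope_ge : ∀ ⦃a b : ℝ⦄, 0 ≤ a → a < b → ψ b - ψ a ≤ deriv ψ a * (b - a) := by
  intro a b ha hab
  have h := hconc.slope_le_deriv ha (le_trans ha hab.le) hab (hψdiff a)
  rw [slope_def_field] at h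
  exact (div_le_iff₀ (by linarith)).mp h

include hψdiff hψ0 hψderiv hconc in
lemma psi_self_bound : ∀ ⦃s : ℝ⦄, 0 ≤ s → s * deriv ψ s ≤ ψ s := by
  intro s hs
  rcases hs.eq_or_lt with h | h
  · simp [← h, hψ0]
  · have h1 := psi_slope_le hψdiff hconc le_rfl h
    rw [hψ0] at h1; nlinarith

include hψdiff hψ0 hψderiv hconc in
lemma psi_nonneg : ∀ ⦃s : ℝ⦄, 0 ≤ s → 0 ≤ ψ s := by
  intro s hs
  have h1 := psi_self_bound hψdiff hψ0 hψderiv hconc hs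
  have h2 := (hψderiv s hs).1
  nlinarith

include hψdiff hψ0 hψderiv hconc in
lemma psi_le_self : ∀ ⦃s : ℝ⦄, 0 ≤ s → ψ s ≤ s := by
  intro s hs
  rcases hs.eq_or_lt with h | h
  · simp [← h, hψ0]
  · have h1 := psi_slope_ge hψdiff hconc le_rfl h
    have h2 := (hψderiv 0 le_rfl).2
    rw [hψ0] at h1; nlinarith

include hψdiff hψ0 hψderiv hconc in
lemma psi_lip : ∀ ⦃a b : ℝ⦄, 0 ≤ a → a ≤ b → ψ b ≤ ψ a + (b - a) := by
  intro a b ha hab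
  rcases hab.eq_or_lt with h | h
  · simp [h]
  · have h1 := psi_slope_ge hψdiff hconc ha h
    have h2 := (hψderiv a ha).2
    nlinarith

include hψdiff hψderiv hconc in
lemma psi_mono : ∀ ⦃a b : ℝ⦄, 0 ≤ a → a ≤ b → ψ a ≤ ψ b := by
  intro a b ha hab
  rcases hab.eq_or_lt with h | h
  · simp [h]
  · have h1 := psi_slope_le hψdiff hconc ha h
    have h2 := (hψderiv b (le_trans ha hab)).1
    nlinarith

end aux

noncomputable def Faux {H : Type*} [NormedAddCommGroup H] [InnerProductSpace ℝ H]
    (ψ : ℝ → ℝ) (x : H) : H :=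
  if x = 0 then (0:H) else (ψ ‖x‖ / ‖x‖) • x

lemma Faux_apply {H : Type*} [NormedAddCommGroup H] [InnerProductSpace ℝ H]
    (ψ : ℝ → ℝ) (x : H) :
    Faux ψ x = if x = 0 then (0:H) else (ψ ‖x‖ / ‖x‖) • x := rfl

section key
variable {H : Type*} [NormedAddCommGroup H] [InnerProductSpace ℝ H]
variable {ψ : ℝ → ℝ} (hψdiff : Differentiable ℝ ψ) (hψ0 : ψ 0 = 0)
    (hψderiv : ∀ x ≥ (0:ℝ), 0 ≤ deriv ψ x ∧ deriv ψ x ≤ 1)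
    (hconc : ConcaveOn ℝ (Set.Ici 0) ψ)

include hψdiff hψ0 hψderiv hconc in
lemma key_mono (a b : H) :
    deriv ψ (max ‖a‖ ‖b‖) * ‖a - b‖ ^ 2 ≤
      inner ℝ (Faux ψ a - Faux ψ b) (a - b) := by
  rw [Faux_apply, Faux_apply]
  set m := deriv ψ (max ‖a‖ ‖b‖) with hm
  have hslope : ∀ α β : ℝ, 0 ≤ β → β ≤ α → m ≤ deriv ψ α →
      m * (α - β)^2 ≤ (ψ α - ψ β) * (α - β) := by
    intro α β hβ hβα hmα
    rcases hβα.eq_or_lt with h | h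
    · simp [h]
    · have h1 := psi_slope_le hψdiff hconc hβ h
      nlinarith
  have hself : ∀ x : H, x ≠ 0 → (inner ℝ ((ψ ‖x‖ / ‖x‖) • x) x : ℝ) = ψ ‖x‖ * ‖x‖ := by
    intro x hx
    have hx' : (0:ℝ) < ‖x‖ := norm_pos_iff.mpr hx
    rw [real_inner_smul_left, real_inner_self_eq_norm_sq]
    field_simp
  by_cases ha : a = 0
  · subst ha
    by_cases hb : b = 0
    · subst hb; simp
    · have hβ : (0:ℝ) < ‖b‖ := norm_pos_iff.mpr hb
      rw [if_pos rfl, if_neg hb, zero_sub, zero_sub, inner_neg_neg, hself b hb,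
        norm_neg, norm_zero, max_eq_right hβ.le] at *
      have hsb := psi_self_bound hψdiff hψ0 hψderiv hconc hβ.le
      nlinarith
  · by_cases hb : b = 0
    · subst hb
      have hα : (0:ℝ) < ‖a‖ := norm_pos_iff.mpr ha
      rw [if_neg ha, if_pos rfl, sub_zero, sub_zero, hself a ha,
        norm_zero, max_eq_left hα.le] at *
      have hsa := psi_self_bound hψdiff hψ0 hψderiv hconc hα.le
      nlinarith
    · have hα : (0:ℝ) < ‖a‖ := norm_pos_iff.mpr ha
      have hβ : (0:ℝ) < ‖b‖ := norm_pos_iff.mpr hb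
      set α := ‖a‖ with hα'
      set β := ‖b‖ with hβ'
      have hcs : (inner ℝ a b : ℝ) ≤ α * β := real_inner_le_norm a b
      have hma : m ≤ deriv ψ α := by
        rw [hm]; exact psi_anti hψdiff hconc hα.le (le_max_left _ _)
      have hmb : m ≤ deriv ψ β := by
        rw [hm]; exact psi_anti hψdiff hconc hβ.le (le_max_right _ _)
      have hsa := psi_self_bound hψdiff hψ0 hψderiv hconc hα.le
      have hsb := psi_self_bound hψdiff hψ0 hψderiv hconc hβ.le
      have hpa : m ≤ ψ α / α := by rw [le_div_iff₀ hα]; nlinarith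
      have hpb : m ≤ ψ β / β := by rw [le_div_iff₀ hβ]; nlinarith
      have hpaα : ψ α / α * α = ψ α := by field_simp
      have hpbβ : ψ β / β * β = ψ β := by field_simp
      have hnorm : ‖a - b‖^2 = α^2 - 2*(inner ℝ a b : ℝ) + β^2 := by
        rw [norm_sub_sq_real, ← hα', ← hβ']
      have hexp : (inner ℝ ((ψ α / α) • a - (ψ β / β) • b) (a - b) : ℝ)
          = (ψ α / α) * (α^2 - (inner ℝ a b : ℝ)) + (ψ β / β) * (β^2 - (inner ℝ a b : ℝ)) := by
        rw [inner_sub_left, real_inner_smul_left, real_inner_smul_left, inner_sub_right,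
          inner_sub_right, real_inner_self_eq_norm_sq, real_inner_self_eq_norm_sq,
          real_inner_comm b a, ← hα', ← hβ']
        ring
      rw [if_neg ha, if_neg hb, hexp, hnorm]
      have h3 : m * (α - β)^2 ≤ (ψ α - ψ β) * (α - β) := by
        rcases le_total β α with h | h
        · exact hslope α β hβ.le h hma
        · have := hslope β α hα.le h hmb
          nlinarith
      set p := ψ α / α
      set q := ψ β / β
      have hPα : p * α = ψ α := hpaα
      have hQβ : q * β = ψ β := hpbβ
      nlinarith [mul_nonneg (sub_nonneg.mpr hcs) (by linarith : (0:ℝ) ≤ p + q - 2*m)]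
end key

section cont
variable {H : Type*} [NormedAddCommGroup H] [InnerProductSpace ℝ H]
variable {ψ : ℝ → ℝ} (hψdiff : Differentiable ℝ ψ) (hψ0 : ψ 0 = 0)
    (hψderiv : ∀ x ≥ (0:ℝ), 0 ≤ deriv ψ x ∧ deriv ψ x ≤ 1)
    (hconc : ConcaveOn ℝ (Set.Ici 0) ψ)

include hψdiff hψ0 hψderiv hconc in
lemma F_norm (x : H) : ‖Faux ψ x‖ = ψ ‖x‖ := by
  rw [Faux_apply]
  by_cases hx : x = 0
  · simp [hx, hψ0]
  · have hx' : (0:ℝ) < ‖x‖ := norm_pos_iff.mpr hx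
    have hnn := psi_nonneg hψdiff hψ0 hψderiv hconc hx'.le
    rw [if_neg hx, norm_smul, Real.norm_eq_abs, abs_div, abs_of_nonneg hnn,
      abs_of_nonneg hx'.le, div_mul_cancel₀ _ hx'.ne']

include hψdiff hψ0 hψderiv hconc in
lemma F_cont : Continuous (fun x : H => Faux ψ x) := by
  rw [continuous_iff_continuousAt]
  intro x
  by_cases hx : x = 0
  · subst hx
    have h0 : Faux ψ (0:H) = 0 := by rw [Faux_apply, if_pos rfl]
    rw [ContinuousAt, h0]
    apply squeeze_zero_norm (fun y => ?_) (continuous_norm.tendsto' 0 _ norm_zero)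
    rw [F_norm hψdiff hψ0 hψderiv hconc y]
    exact psi_le_self hψdiff hψ0 hψderiv hconc (norm_nonneg y)
  · have hev : (fun y : H => Faux ψ y)
        =ᶠ[nhds x] fun y => (ψ ‖y‖ / ‖y‖) • y := by
      filter_upwards [isOpen_compl_singleton.mem_nhds (by simpa using hx)] with y hy
      rw [Faux_apply]; exact if_neg (by simpa using hy)
    refine ContinuousAt.congr ?_ hev.symm
    exact ((hψdiff.continuous.comp continuous_norm).continuousAt.div
      continuous_norm.continuousAt (norm_ne_zero_iff.mpr hx)).smul continuousAt_id

end cont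

section rc
variable {ψ : ℝ → ℝ} (hψdiff : Differentiable ℝ ψ) (hψ0 : ψ 0 = 0)
    (hψderiv : ∀ x ≥ (0:ℝ), 0 ≤ deriv ψ x ∧ deriv ψ x ≤ 1)
    (hconc : ConcaveOn ℝ (Set.Ici 0) ψ)

include hψdiff hconc in
lemma deriv_right_cont (x : ℝ) (hx : 0 ≤ x) :
    Filter.Tendsto (fun t => deriv ψ (x + t)) (nhdsWithin 0 (Set.Ioi 0))
      (nhds (deriv ψ x)) := by
  -- slope tendsto
  have hslope : Filter.Tendsto (fun t : ℝ => (ψ (x + t) - ψ x) / t)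
      (nhdsWithin 0 (Set.Ioi 0)) (nhds (deriv ψ x)) := by
    have h := (hψdiff x).hasDerivAt.tendsto_slope_zero
    have h2 : Filter.Tendsto (fun t : ℝ => t⁻¹ • (ψ (x + t) - ψ x))
        (nhdsWithin 0 (Set.Ioi 0)) (nhds (deriv ψ x)) :=
      h.mono_left (nhdsWithin_mono 0 (by intro t ht; exact ne_of_gt ht))
    refine h2.congr fun t => ?_
    rw [smul_eq_mul, inv_mul_eq_div]
  have hdouble : Filter.Tendsto (fun t : ℝ => (2:ℝ) * t)
      (nhdsWithin 0 (Set.Ioi 0)) (nhdsWithin 0 (Set.Ioi 0)) := by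
    apply tendsto_nhdsWithin_of_tendsto_nhds_of_eventually_within
    · have h0 : Filter.Tendsto (fun t:ℝ => 2*t) (nhds 0) (nhds (2*0)) :=
        (continuous_const.mul continuous_id).tendsto 0
      simpa using h0.mono_left nhdsWithin_le_nhds
    · filter_upwards [self_mem_nhdsWithin] with t ht
      exact mul_pos two_pos (Set.mem_Ioi.mp ht)
  have hlower : Filter.Tendsto
      (fun t : ℝ => 2 * ((ψ (x + 2*t) - ψ x) / (2*t)) - (ψ (x + t) - ψ x) / t)
      (nhdsWithin 0 (Set.Ioi 0)) (nhds (deriv ψ x)) := by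
    have := ((hslope.comp hdouble).const_mul 2).sub hslope
    simpa [Function.comp, two_mul] using this
  refine tendsto_of_tendsto_of_tendsto_of_le_of_le' hlower tendsto_const_nhds ?_ ?_
  · filter_upwards [self_mem_nhdsWithin] with t ht
    have h1 : x + t < x + 2*t := by linarith [Set.mem_Ioi.mp ht]
    have h2 := psi_slope_ge hψdiff hconc (by linarith [Set.mem_Ioi.mp ht] : (0:ℝ) ≤ x + t) h1
    have ht' := Set.mem_Ioi.mp ht
    have : x + 2*t - (x + t) = t := by ring
    rw [this] at h2
    have e1 : 2 * ((ψ (x + 2*t) - ψ x) / (2*t)) - (ψ (x + t) - ψ x) / t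
        = (ψ (x + 2*t) - ψ (x + t)) / t := by
      field_simp; ring
    rw [e1, div_le_iff₀ ht']
    linarith
  · filter_upwards [self_mem_nhdsWithin] with t ht
    exact psi_anti hψdiff hconc hx (by linarith [Set.mem_Ioi.mp ht])

end rc


/-- The quadratic form of the Jacobian of Z(θ) = E[(X−θ)/‖X−θ‖·ψ(‖X−θ‖)] satisfies
uᵀ Jac(Z)(θ) u ≤ −E[ψ'(‖X − θ‖)] for every unit vector u. -/
theorem jacobian_quadratic_form_bound {H : Type*} [NormedAddCommGroup H]
    [InnerProductSpace ℝ H] [CompleteSpace H]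
    {Ω : Type*} [MeasurableSpace Ω] (μ : Measure Ω) [IsProbabilityMeasure μ]
    (X : Ω → H) (hXmeas : AEStronglyMeasurable X μ)
    (ψ : ℝ → ℝ) (hψdiff : Differentiable ℝ ψ) (hψ0 : ψ 0 = 0)
    (hψderiv : ∀ x ≥ (0:ℝ), 0 ≤ deriv ψ x ∧ deriv ψ x ≤ 1)
    (hconc : ConcaveOn ℝ (Set.Ici 0) ψ)
    (hint : Integrable (fun ω => ψ ‖X ω‖) μ)
    (Z : H → H)
    (hZ : ∀ θ : H, Z θ =
      ∫ ω, (if X ω - θ = 0 then (0:H) else (ψ ‖X ω - θ‖ / ‖X ω - θ‖) • (X ω - θ)) ∂μ)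
    (θ : H) (D : H →L[ℝ] H) (hD : HasFDerivAt Z D θ)
    (hderiv_int : Integrable (fun ω => deriv ψ ‖X ω - θ‖) μ) :
    ∀ u : H, ‖u‖ = 1 →
      (inner ℝ u (D u) : ℝ) ≤ -∫ ω, deriv ψ ‖X ω - θ‖ ∂μ := by
  intro u hu
  have hZ' : ∀ v : H, Z v = ∫ ω, Faux ψ (X ω - v) ∂μ := by
    intro v; rw [hZ v]; simp only [Faux_apply]
  have hFmeas : ∀ v : H, AEStronglyMeasurable (fun ω => Faux ψ (X ω - v)) μ := fun v =>
    (F_cont hψdiff hψ0 hψderiv hconc).comp_aestronglyMeasurable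
      (hXmeas.sub aestronglyMeasurable_const)
  have hFint : ∀ v : H, Integrable (fun ω => Faux ψ (X ω - v)) μ := by
    intro v
    refine (hint.add (integrable_const ‖v‖)).mono' (hFmeas v) ?_
    filter_upwards with ω
    rw [F_norm hψdiff hψ0 hψderiv hconc]
    have h1 : ‖X ω - v‖ ≤ ‖X ω‖ + ‖v‖ := norm_sub_le _ _
    have h2 := psi_mono hψdiff hψderiv hconc (norm_nonneg _) h1
    have h3 := psi_lip hψdiff hψ0 hψderiv hconc (norm_nonneg (X ω))
      (le_add_of_nonneg_right (norm_nonneg v) : ‖X ω‖ ≤ ‖X ω‖ + ‖v‖)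
    simp only [Pi.add_apply]
    linarith
  set r : Ω → ℝ := fun ω => ‖X ω - θ‖ with hr
  have hrnn : ∀ ω, 0 ≤ r ω := fun ω => norm_nonneg _
  have hrmeas : AEStronglyMeasurable r μ := (hXmeas.sub aestronglyMeasurable_const).norm
  have hdint : ∀ t : ℝ, 0 ≤ t → Integrable (fun ω => deriv ψ (r ω + t)) μ := by
    intro t ht
    have hm : AEStronglyMeasurable (fun ω => deriv ψ (r ω + t)) μ :=
      ((measurable_deriv ψ).comp_aemeasurable
        (hrmeas.aemeasurable.add_const t)).aestronglyMeasurable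
    refine (integrable_const (1:ℝ)).mono' hm ?_
    filter_upwards with ω
    have h := hψderiv (r ω + t) (by linarith [hrnn ω])
    rw [Real.norm_eq_abs, abs_le]
    constructor <;> [linarith [h.1]; linarith [h.2]]
  set g : ℝ → ℝ := fun t => (inner ℝ u (Z (θ + t • u)) : ℝ) with hg
  have hcurve : HasDerivAt (fun t : ℝ => θ + t • u) u 0 := by
    simpa using ((hasDerivAt_id (0:ℝ)).smul_const u).const_add θ
  have h0 : θ + (0:ℝ) • u = θ := by simp
  have hZd : HasDerivAt (fun t : ℝ => Z (θ + t • u)) (D u) 0 :=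
    HasFDerivAt.comp_hasDerivAt 0 (h0.symm ▸ hD) hcurve
  have hgd : HasDerivAt g ((inner ℝ u (D u) : ℝ)) 0 := by
    have h := (innerSL ℝ u).hasFDerivAt.comp_hasDerivAt 0 hZd
    exact h
  -- slope bound
  have hslopeb : ∀ t : ℝ, t ∈ Set.Ioi (0:ℝ) →
      (g t - g 0) / t ≤ -∫ ω, deriv ψ (r ω + t) ∂μ := by
    intro t ht
    have ht' : (0:ℝ) < t := ht
    have hpt : ∀ ω, (inner ℝ u (Faux ψ (X ω - (θ + t • u)) - Faux ψ (X ω - θ)) : ℝ)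
        ≤ -(t * deriv ψ (r ω + t)) := by
      intro ω
      have hab : (X ω - θ) - (X ω - (θ + t • u)) = t • u := by abel
      have hkey := key_mono hψdiff hψ0 hψderiv hconc (X ω - θ) (X ω - (θ + t • u))
      rw [hab] at hkey
      have hnt : ‖t • u‖ = t := by
        rw [norm_smul, hu, Real.norm_eq_abs, abs_of_pos ht', mul_one]
      rw [hnt, real_inner_smul_right] at hkey
      have hbn : ‖X ω - (θ + t • u)‖ ≤ r ω + t := by
        have : X ω - (θ + t • u) = (X ω - θ) - t • u := by abel
        rw [this]
        calc ‖(X ω - θ) - t • u‖ ≤ ‖X ω - θ‖ + ‖t • u‖ := norm_sub_le _ _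
          _ = r ω + t := by rw [hnt, hr]
      have hmax : deriv ψ (r ω + t) ≤ deriv ψ (max ‖X ω - θ‖ ‖X ω - (θ + t • u)‖) := by
        apply psi_anti hψdiff hconc (le_max_iff.mpr (Or.inl (hrnn ω)))
        exact max_le (by linarith [hrnn ω]) hbn
      have hswap : (inner ℝ u (Faux ψ (X ω - (θ + t • u)) - Faux ψ (X ω - θ)) : ℝ)
          = -(inner ℝ (Faux ψ (X ω - θ) - Faux ψ (X ω - (θ + t • u))) u) := by
        rw [real_inner_comm, inner_sub_left, inner_sub_left]; ring
      rw [hswap]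
      nlinarith
    have hint1 : Integrable
        (fun ω => (inner ℝ u (Faux ψ (X ω - (θ + t • u)) - Faux ψ (X ω - θ)) : ℝ)) μ :=
      (innerSL ℝ u).integrable_comp ((hFint (θ + t • u)).sub (hFint θ))
    have hint2 : Integrable (fun ω => -(t * deriv ψ (r ω + t))) μ :=
      (((hdint t ht'.le).const_mul t)).neg
    have hle := integral_mono hint1 hint2 hpt
    have hZt : Z (θ + t • u) - Z θ
        = ∫ ω, (Faux ψ (X ω - (θ + t • u)) - Faux ψ (X ω - θ)) ∂μ := by
      rw [hZ' (θ + t • u), hZ' θ, ← integral_sub (hFint _) (hFint _)]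
    have hL : g t - g 0 = ∫ ω,
        (inner ℝ u (Faux ψ (X ω - (θ + t • u)) - Faux ψ (X ω - θ)) : ℝ) ∂μ := by
      have e1 : g t - g 0 = (inner ℝ u (Z (θ + t • u) - Z θ) : ℝ) := by
        rw [hg]; simp only [h0]; rw [inner_sub_right]
      have e2 : (inner ℝ u (∫ ω, (Faux ψ (X ω - (θ + t • u)) - Faux ψ (X ω - θ)) ∂μ) : ℝ)
          = ∫ ω, (inner ℝ u (Faux ψ (X ω - (θ + t • u)) - Faux ψ (X ω - θ)) : ℝ) ∂μ :=
        ((innerSL ℝ u).integral_comp_comm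
          ((hFint (θ + t • u)).sub (hFint θ))).symm
      rw [e1, hZt, e2]
    have hR : ∫ ω, -(t * deriv ψ (r ω + t)) ∂μ
        = -(t * ∫ ω, deriv ψ (r ω + t) ∂μ) := by
      rw [integral_neg, integral_const_mul]
    rw [div_le_iff₀ ht']
    rw [hL]
    calc (∫ ω, (inner ℝ u (Faux ψ (X ω - (θ + t • u)) - Faux ψ (X ω - θ)) : ℝ) ∂μ)
        ≤ ∫ ω, -(t * deriv ψ (r ω + t)) ∂μ := hle
      _ = (-∫ ω, deriv ψ (r ω + t) ∂μ) * t := by rw [hR]; ring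
  -- limit of RHS
  have hRlim : Filter.Tendsto (fun t => ∫ ω, deriv ψ (r ω + t) ∂μ)
      (nhdsWithin 0 (Set.Ioi 0)) (nhds (∫ ω, deriv ψ (r ω) ∂μ)) := by
    refine tendsto_integral_filter_of_dominated_convergence (fun _ => (1:ℝ)) ?_ ?_
      (integrable_const 1) ?_
    · filter_upwards [self_mem_nhdsWithin] with t ht
      exact ((measurable_deriv ψ).comp_aemeasurable
        (hrmeas.aemeasurable.add_const t)).aestronglyMeasurable
    · filter_upwards [self_mem_nhdsWithin] with t ht
      filter_upwards with ω
      have h := hψderiv (r ω + t) (by linarith [hrnn ω, Set.mem_Ioi.mp ht])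
      rw [Real.norm_eq_abs, abs_le]
      constructor <;> [linarith [h.1]; linarith [h.2]]
    · filter_upwards with ω
      exact deriv_right_cont hψdiff hconc (r ω) (hrnn ω)
  have hgl : Filter.Tendsto (fun t => (g t - g 0) / t) (nhdsWithin 0 (Set.Ioi 0))
      (nhds ((inner ℝ u (D u) : ℝ))) := by
    have h := hasDerivAt_iff_tendsto_slope.mp hgd
    have h2 := h.mono_left (nhdsWithin_mono _ (fun t ht => ne_of_gt ht))
    refine h2.congr fun t => ?_
    rw [slope_def_field]
    simp
  refine le_of_tendsto_of_tendsto hgl hRlim.neg ?_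
  filter_upwards [self_mem_nhdsWithin] with t ht
  exact hslopeb t ht
end
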